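/- Let n be an integer with n ≥ 2, let k be the smallest nonnegative integer satisfying 2^k ≥ n / log₂ n, and let m = ⌈n / k⌉. Then m ≤ 3n / log₂ n. -/

import Mathlib

/-- Explicit bound from the proof of Lemma 3.1: if `k` is the smallest natural
number with `2^k ≥ n / log₂ n` and `m = ⌈n / k⌉`, then for every integer
`n ≥ 2`, `m ≤ 3n / log₂ n`. -/
theorem m_le_three_n_div_log (n : ℕ) (hn : 2 ≤ n)
    (k : ℕ) (hk : IsLeast {j : ℕ | (n : ℝ) / Real.logb 2 n ≤ (2 : ℝ) ^ j} k) :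
    (⌈(n : ℝ) / (k : ℝ)⌉ : ℝ) ≤ 3 * n / Real.logb 2 n := by
  have h2n : (2 : ℝ) ≤ (n : ℝ) := by exact_mod_cast hn
  have hnpos : (0 : ℝ) < n := by linarith
  set L := Real.logb 2 n with hLdef
  have hL1 : (1 : ℝ) ≤ L := by
    have : Real.logb 2 2 ≤ Real.logb 2 n :=
      Real.logb_le_logb_of_le one_lt_two (by norm_num) h2n
    simpa [Real.logb_self_eq_one] using this
  have hLpos : (0 : ℝ) < L := by linarith
  have hLltn : L < n := by
    rw [hLdef, Real.logb_lt_iff_lt_rpow one_lt_two hnpos]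
    have h1 : (n : ℝ) < 2 ^ n := by exact_mod_cast (Nat.lt_two_pow_self : n < 2 ^ n)
    calc (n : ℝ) < 2 ^ n := h1
      _ = (2 : ℝ) ^ (n : ℝ) := by rw [Real.rpow_natCast]
  have hmem : (n : ℝ) / L ≤ (2 : ℝ) ^ k := hk.1
  have hnL1 : (1 : ℝ) < (n : ℝ) / L := (one_lt_div hLpos).2 hLltn
  have hk1 : 1 ≤ k := by
    rcases Nat.eq_zero_or_pos k with h | h
    · exfalso; rw [h] at hmem; simp at hmem; linarith
    · exact h
  have hk1R : (1 : ℝ) ≤ (k : ℝ) := by exact_mod_cast hk1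
  -- From membership: L - log₂ L ≤ k
  have hlog : L - Real.logb 2 L ≤ (k : ℝ) := by
    have h1 : Real.logb 2 ((n : ℝ) / L) ≤ Real.logb 2 ((2 : ℝ) ^ k) :=
      Real.logb_le_logb_of_le one_lt_two (by positivity) hmem
    rw [Real.logb_div (by positivity) (by positivity)] at h1
    rw [Real.logb_pow, Real.logb_self_eq_one one_lt_two] at h1
    simpa using h1
  have hlog2_lb : (0.6931471803 : ℝ) < Real.log 2 := Real.log_two_gt_d9
  have hlog2_pos : (0 : ℝ) < Real.log 2 := by linarith
  -- key claim: L / 2 ≤ k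
  have hhalf : L / 2 ≤ (k : ℝ) := by
    rcases le_or_gt L 2 with hL2 | hL2
    · linarith
    rcases le_or_gt L 4 with hL4 | hL4
    · -- 2 < L ≤ 4 : show k ≥ 2
      have ht : Real.log (L / 2) ≤ L / 2 - 1 :=
        Real.log_le_sub_one_of_pos (by positivity)
      have hsplit : Real.log (L / 2) = Real.log L - Real.log 2 :=
        Real.log_div (by positivity) (by norm_num)
      have hlbL : Real.logb 2 L < L - 1 := by
        rw [Real.logb, div_lt_iff₀ hlog2_pos]
        nlinarith
      have h1k : (1 : ℝ) < (k : ℝ) := by linarith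
      have h2k : (2 : ℝ) ≤ (k : ℝ) := by
        have : 1 < k := by exact_mod_cast h1k
        exact_mod_cast this
      linarith
    · -- L > 4 : log₂ L ≤ L / 2
      have ht : Real.log (L / 4) ≤ L / 4 - 1 :=
        Real.log_le_sub_one_of_pos (by positivity)
      have hsplit : Real.log (L / 4) = Real.log L - Real.log 4 :=
        Real.log_div (by positivity) (by norm_num)
      have h4 : Real.log 4 = 2 * Real.log 2 := by
        rw [show (4 : ℝ) = 2 ^ 2 by norm_num, Real.log_pow]; ring
      have hlbL : Real.logb 2 L ≤ L / 2 := by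
        rw [Real.logb, div_le_iff₀ hlog2_pos]
        nlinarith
      linarith
  have hhalfpos : (0 : ℝ) < L / 2 := by linarith
  have hkpos : (0 : ℝ) < (k : ℝ) := by linarith
  have hceil : (⌈(n : ℝ) / (k : ℝ)⌉ : ℝ) < (n : ℝ) / (k : ℝ) + 1 :=
    Int.ceil_lt_add_one _
  have hdiv : (n : ℝ) / (k : ℝ) ≤ (n : ℝ) / (L / 2) :=
    div_le_div_of_nonneg_left hnpos.le hhalfpos hhalf
  have heq : (n : ℝ) / (L / 2) = 2 * n / L := by
    field_simp
  have hone : (1 : ℝ) ≤ (n : ℝ) / L := hnL1.le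
  have : 3 * (n : ℝ) / L = 2 * n / L + n / L := by ring
  linarith
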